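/- Let θ ∈ Θ and let X¹, X², … be independent random binary vectors, each with distribution π_θ. Then almost surely there exists N such that for all n ≥ N, the empirical log pseudo-likelihood T ↦ (1/n) Σ_{j=1}^n LPL(X^j, T) is strictly concave on Θ. -/

import Mathlib

open scoped BigOperators RealInnerProductSpace Classical
open Finset

/-- Binary vectors of length `L`. -/
abbrev BinVec (L : ℕ) := Fin L → Bool

/-- Real value (0 or 1) of the `s`-th coordinate of a binary vector. -/
def bval {L : ℕ} (x : BinVec L) (s : Fin L) : ℝ := if x s then 1 else 0

/-- Index set for the parameter space: pairs `s ≤ t`; the diagonal `(s,s)` codes `θ_s`,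
off-diagonal `(s,t)` with `s < t` codes `θ_{s,t}`.  Cardinality `L(L+1)/2`. -/
abbrev Idx (L : ℕ) := {p : Fin L × Fin L // p.1 ≤ p.2}

/-- The parameter space `Θ`, with its Euclidean norm and inner product. -/
abbrev Theta (L : ℕ) := EuclideanSpace ℝ (Idx L)

/-- Symmetrized coordinate access: `coordOf θ s s = θ_s`, and `coordOf θ s t = θ_{s,t} = θ_{t,s}`. -/
def coordOf {L : ℕ} (θ : Theta L) (s t : Fin L) : ℝ :=
  if h : s ≤ t then θ ⟨(s, t), h⟩ else θ ⟨(t, s), le_of_not_ge h⟩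

/-- The statistics vector `U(x) ∈ Θ`, with `U_s(x) = x_s` and `U_{s,t}(x) = x_s x_t`. -/
noncomputable def U {L : ℕ} (x : BinVec L) : Theta L :=
  (EuclideanSpace.equiv (Idx L) ℝ).symm fun i => bval x i.1.1 * bval x i.1.2

/-- Partition function `Z(θ)`. -/
noncomputable def Zfun {L : ℕ} (θ : Theta L) : ℝ :=
  ∑ y : BinVec L, Real.exp (-⟪θ, U y⟫)

/-- The autologistic distribution `π_θ`. -/
noncomputable def piA {L : ℕ} (θ : Theta L) (x : BinVec L) : ℝ :=
  Real.exp (-⟪θ, U x⟫) / Zfun θ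

/-- `a_{s,x}(T) = −(T_s + Σ_{r≠s} T_{s,r} x_r)`. -/
noncomputable def aFun {L : ℕ} (s : Fin L) (x : BinVec L) (T : Theta L) : ℝ :=
  -(coordOf T s s + ∑ r ∈ Finset.univ.erase s, coordOf T s r * bval x r)

/-- The vector `A(s,x) ∈ Θ` with `A_s(s,x) = −1`, `A_{s,r}(s,x) = −x_r` for `r ≠ s`,
all other coordinates `0`. -/
noncomputable def Avec {L : ℕ} (s : Fin L) (x : BinVec L) : Theta L :=
  (EuclideanSpace.equiv (Idx L) ℝ).symm fun i =>
    if i.1.1 = s ∧ i.1.2 = s then -1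
    else if i.1.1 = s then -(bval x i.1.2)
    else if i.1.2 = s then -(bval x i.1.1)
    else 0

/-- `g(z) = 1/(1+e^z)`. -/
noncomputable def gfun (z : ℝ) : ℝ := 1 / (1 + Real.exp z)

/-- `h(z) = e^z/(1+e^z)`. -/
noncomputable def hfun (z : ℝ) : ℝ := Real.exp z / (1 + Real.exp z)

/-- Local log pseudo-likelihood `LPL_{s,x}(T)`. -/
noncomputable def LPLs {L : ℕ} (s : Fin L) (x : BinVec L) (T : Theta L) : ℝ :=
  bval x s * aFun s x T + Real.log (gfun (aFun s x T))

/-- Log pseudo-likelihood `LPL(x,T) = Σ_s LPL_{s,x}(T)`. -/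
noncomputable def LPL {L : ℕ} (x : BinVec L) (T : Theta L) : ℝ := ∑ s, LPLs s x T

/-- Mean log pseudo-likelihood `g_θ(T)`. -/
noncomputable def gbar {L : ℕ} (θ T : Theta L) : ℝ := ∑ x : BinVec L, piA θ x * LPL x T


/-! ### Auxiliary lemmas -/

noncomputable def psi (z : ℝ) : ℝ := -Real.log (1 + Real.exp z)

lemma one_add_exp_pos (z : ℝ) : (0:ℝ) < 1 + Real.exp z := by positivity

lemma psi_hasDerivAt (z : ℝ) :
    HasDerivAt psi (-(Real.exp z / (1 + Real.exp z))) z := by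
  have h1 : HasDerivAt (fun z : ℝ => 1 + Real.exp z) (Real.exp z) z :=
    (Real.hasDerivAt_exp z).const_add 1
  have h2 := (h1.log (ne_of_gt (one_add_exp_pos z))).neg
  have h3 : psi = -fun y => Real.log (1 + Real.exp y) := by funext y; simp [psi]
  rw [h3]; simpa using h2

lemma psi_strictConcave : StrictConcaveOn ℝ Set.univ psi := by
  have hc : Continuous psi := by
    rw [continuous_iff_continuousAt]
    exact fun z => (psi_hasDerivAt z).differentiableAt.continuousAt
  have hd : deriv psi = fun z => -(Real.exp z / (1 + Real.exp z)) := by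
    funext z; exact (psi_hasDerivAt z).deriv
  refine StrictAnti.strictConcaveOn_univ_of_deriv hc ?_
  rw [hd]
  intro z w hzw
  have hz := one_add_exp_pos z
  have hw := one_add_exp_pos w
  have : Real.exp z / (1 + Real.exp z) < Real.exp w / (1 + Real.exp w) := by
    rw [div_lt_div_iff₀ hz hw]
    have := Real.exp_lt_exp.2 hzw
    nlinarith [Real.exp_pos z, Real.exp_pos w]
  linarith

lemma log_gfun (z : ℝ) : Real.log (gfun z) = psi z := by
  rw [gfun, psi, one_div, Real.log_inv]

lemma psi_comb_le {u v a b : ℝ} (ha : 0 ≤ a) (hb : 0 ≤ b) (hab : a + b = 1) :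
    a * psi u + b * psi v ≤ psi (a * u + b * v) := by
  simpa [smul_eq_mul] using
    psi_strictConcave.concaveOn.2 (Set.mem_univ u) (Set.mem_univ v) ha hb hab

lemma psi_comb_lt {u v a b : ℝ} (huv : u ≠ v) (ha : 0 < a) (hb : 0 < b) (hab : a + b = 1) :
    a * psi u + b * psi v < psi (a * u + b * v) := by
  simpa [smul_eq_mul] using
    psi_strictConcave.2 (Set.mem_univ u) (Set.mem_univ v) huv ha hb hab

lemma coordOf_comb {L : ℕ} (a b : ℝ) (T₀ T₁ : Theta L) (s t : Fin L) :
    coordOf (a • T₀ + b • T₁) s t = a * coordOf T₀ s t + b * coordOf T₁ s t := by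
  unfold coordOf
  split <;> simp [PiLp.add_apply, PiLp.smul_apply, smul_eq_mul]

lemma aFun_comb {L : ℕ} (a b : ℝ) (s : Fin L) (x : BinVec L) (T₀ T₁ : Theta L) :
    aFun s x (a • T₀ + b • T₁) = a * aFun s x T₀ + b * aFun s x T₁ := by
  simp only [aFun, coordOf_comb, add_mul, Finset.sum_add_distrib, mul_assoc, ← Finset.mul_sum]
  ring

lemma LPLs_comb_le {L : ℕ} (s : Fin L) (x : BinVec L) {a b : ℝ} (ha : 0 ≤ a) (hb : 0 ≤ b)
    (hab : a + b = 1) (T₀ T₁ : Theta L) :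
    a * LPLs s x T₀ + b * LPLs s x T₁ ≤ LPLs s x (a • T₀ + b • T₁) := by
  simp only [LPLs, log_gfun, aFun_comb]
  have h1 := psi_comb_le (u := aFun s x T₀) (v := aFun s x T₁) ha hb hab
  have h2 : bval x s * (a * aFun s x T₀ + b * aFun s x T₁)
      = a * (bval x s * aFun s x T₀) + b * (bval x s * aFun s x T₁) := by ring
  linarith

lemma LPLs_comb_lt {L : ℕ} (s : Fin L) (x : BinVec L) {a b : ℝ} (ha : 0 < a) (hb : 0 < b)
    (hab : a + b = 1) {T₀ T₁ : Theta L} (hne : aFun s x T₀ ≠ aFun s x T₁) :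
    a * LPLs s x T₀ + b * LPLs s x T₁ < LPLs s x (a • T₀ + b • T₁) := by
  simp only [LPLs, log_gfun, aFun_comb]
  have h1 := psi_comb_lt (u := aFun s x T₀) (v := aFun s x T₁) hne ha hb hab
  have h2 : bval x s * (a * aFun s x T₀ + b * aFun s x T₁)
      = a * (bval x s * aFun s x T₀) + b * (bval x s * aFun s x T₁) := by ring
  linarith

lemma LPL_comb_le {L : ℕ} (x : BinVec L) {a b : ℝ} (ha : 0 ≤ a) (hb : 0 ≤ b)
    (hab : a + b = 1) (T₀ T₁ : Theta L) :
    a * LPL x T₀ + b * LPL x T₁ ≤ LPL x (a • T₀ + b • T₁) := by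
  simp only [LPL, Finset.mul_sum, ← Finset.sum_add_distrib]
  exact Finset.sum_le_sum fun s _ => LPLs_comb_le s x ha hb hab T₀ T₁

lemma LPL_comb_lt {L : ℕ} (x : BinVec L) {a b : ℝ} (ha : 0 < a) (hb : 0 < b)
    (hab : a + b = 1) {T₀ T₁ : Theta L} (hne : ∃ s, aFun s x T₀ ≠ aFun s x T₁) :
    a * LPL x T₀ + b * LPL x T₁ < LPL x (a • T₀ + b • T₁) := by
  obtain ⟨s, hs⟩ := hne
  simp only [LPL, Finset.mul_sum, ← Finset.sum_add_distrib]
  exact Finset.sum_lt_sum (fun t _ => LPLs_comb_le t x ha.le hb.le hab T₀ T₁)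
    ⟨s, Finset.mem_univ s, LPLs_comb_lt s x ha hb hab hs⟩

lemma separating {L : ℕ} {T₀ T₁ : Theta L}
    (h : ∀ (s : Fin L) (v : BinVec L), aFun s v T₀ = aFun s v T₁) : T₀ = T₁ := by
  have hdiag : ∀ s : Fin L, coordOf T₀ s s = coordOf T₁ s s := by
    intro s
    have h0 := h s (fun _ => false)
    simp only [aFun, bval, if_neg (Bool.false_ne_true ∘ id), Bool.false_eq_true, if_false,
      mul_zero, Finset.sum_const_zero, add_zero, neg_inj] at h0
    exact h0
  have hoff : ∀ s r : Fin L, r ≠ s → coordOf T₀ s r = coordOf T₁ s r := by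
    intro s r hrs
    have hsum : ∀ T : Theta L,
        ∑ t ∈ Finset.univ.erase s, coordOf T s t * bval (fun t => decide (t = r)) t
          = coordOf T s r := by
      intro T
      rw [Finset.sum_eq_single r]
      · simp [bval]
      · intro t _ htr
        simp [bval, htr]
      · intro hr
        exact absurd (Finset.mem_erase.2 ⟨hrs, Finset.mem_univ r⟩) hr
    have h0 := h s (fun t => decide (t = r))
    simp only [aFun, hsum, neg_inj] at h0
    have := hdiag s
    linarith
  ext i
  obtain ⟨⟨p, q⟩, hpq⟩ := i
  rcases eq_or_ne p q with rfl | hne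
  · have := hdiag p
    simpa [coordOf] using this
  · have := hoff p q (Ne.symm hne)
    rw [coordOf, coordOf, dif_pos hpq, dif_pos hpq] at this
    exact this

lemma key {L n : ℕ} (hn : 1 ≤ n) (x : ℕ → BinVec L)
    (hx : ∀ v : BinVec L, ∃ j, j < n ∧ x j = v) :
    StrictConcaveOn ℝ Set.univ
      (fun T : Theta L => (1 / n : ℝ) * ∑ j ∈ Finset.range n, LPL (x j) T) := by
  refine ⟨convex_univ, fun T₀ _ T₁ _ hne a b ha hb hab => ?_⟩
  have hsep : ∃ s v, aFun s v T₀ ≠ aFun s v T₁ := by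
    by_contra hcon
    push_neg at hcon
    exact hne (separating fun s v => hcon s v)
  obtain ⟨s, v, hsv⟩ := hsep
  obtain ⟨j0, hj0n, hj0⟩ := hx v
  have hlt : ∑ j ∈ Finset.range n, (a * LPL (x j) T₀ + b * LPL (x j) T₁)
      < ∑ j ∈ Finset.range n, LPL (x j) (a • T₀ + b • T₁) := by
    refine Finset.sum_lt_sum (fun j _ => LPL_comb_le (x j) ha.le hb.le hab T₀ T₁)
      ⟨j0, Finset.mem_range.2 hj0n, ?_⟩
    exact LPL_comb_lt (x j0) ha hb hab ⟨s, by rw [hj0]; exact hsv⟩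
  have hpos : (0:ℝ) < 1 / n := by
    have : (0:ℝ) < n := by exact_mod_cast hn
    positivity
  have := mul_lt_mul_of_pos_left hlt hpos
  simp only [smul_eq_mul]
  calc a * ((1 / n : ℝ) * ∑ j ∈ Finset.range n, LPL (x j) T₀)
        + b * ((1 / n : ℝ) * ∑ j ∈ Finset.range n, LPL (x j) T₁)
      = (1 / n : ℝ) * ∑ j ∈ Finset.range n, (a * LPL (x j) T₀ + b * LPL (x j) T₁) := by
        rw [Finset.sum_add_distrib, ← Finset.mul_sum, ← Finset.mul_sum]; ring
    _ < (1 / n : ℝ) * ∑ j ∈ Finset.range n, LPL (x j) (a • T₀ + b • T₁) := this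


/-- for i.i.d. samples `X¹, X², …` from `π_θ`, almost surely the empirical
log pseudo-likelihood is eventually strictly concave on `Θ`. -/
theorem stmt7 (L : ℕ) (hL : 1 ≤ L) (θ : Theta L)
    {Ω : Type*} [MeasurableSpace Ω] (μ : MeasureTheory.Measure Ω)
    [MeasureTheory.IsProbabilityMeasure μ]
    (X : ℕ → Ω → BinVec L) (hmeas : ∀ j, Measurable (X j))
    (hindep : ProbabilityTheory.iIndepFun X μ)
    (hlaw : ∀ (j : ℕ) (x : BinVec L), μ {ω | X j ω = x} = ENNReal.ofReal (piA θ x)) :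
    ∀ᵐ ω ∂μ, ∃ N : ℕ, ∀ n : ℕ, N ≤ n →
      StrictConcaveOn ℝ Set.univ
        (fun T : Theta L => (1 / n : ℝ) * ∑ j ∈ Finset.range n, LPL (X j ω) T) := by
    classical
  have hZ : 0 < Zfun θ :=
    Finset.sum_pos (fun y _ => Real.exp_pos _) ⟨fun _ => false, Finset.mem_univ _⟩
  have hpi : ∀ x : BinVec L, 0 < piA θ x := fun x => div_pos (Real.exp_pos _) hZ
  have hEm : ∀ (x : BinVec L) (j : ℕ), MeasurableSet (X j ⁻¹' {x}) :=
    fun x j => hmeas j (measurableSet_singleton x)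
  have hEmeasure : ∀ (x : BinVec L) (j : ℕ), μ (X j ⁻¹' {x}) = ENNReal.ofReal (piA θ x) := by
    intro x j
    rw [← hlaw j x]
    rfl
  have hindepSet : ∀ x : BinVec L, ProbabilityTheory.iIndepSet (fun j => X j ⁻¹' {x}) μ := by
    intro x
    rw [ProbabilityTheory.iIndepSet_iff_meas_biInter (hEm x)]
    intro s
    exact hindep.measure_inter_preimage_eq_mul s
      (sets := fun _ => {x}) (fun i _ => measurableSet_singleton x)
  have hBC : ∀ x : BinVec L, μ (Filter.limsup (fun j => X j ⁻¹' {x}) Filter.atTop) = 1 := by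
    intro x
    refine ProbabilityTheory.measure_limsup_eq_one (hEm x) (hindepSet x) ?_
    simp only [hEmeasure]
    exact ENNReal.tsum_const_eq_top_of_ne_zero (ne_of_gt (ENNReal.ofReal_pos.2 (hpi x)))
  have hae : ∀ᵐ ω ∂μ, ∀ x : BinVec L, ∃ j, X j ω = x := by
    rw [MeasureTheory.ae_all_iff]
    intro x
    have hms : MeasurableSet (Filter.limsup (fun j => X j ⁻¹' {x}) Filter.atTop) :=
      MeasurableSet.measurableSet_limsup (hEm x)
    have hcompl : μ (Filter.limsup (fun j => X j ⁻¹' {x}) Filter.atTop)ᶜ = 0 := by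
      rw [MeasureTheory.measure_compl hms (MeasureTheory.measure_ne_top μ _), hBC x,
        MeasureTheory.measure_univ]
      simp
    have hsub : ∀ᵐ ω ∂μ, ω ∈ Filter.limsup (fun j => X j ⁻¹' {x}) Filter.atTop := by
      rw [MeasureTheory.ae_iff]
      exact hcompl
    filter_upwards [hsub] with ω hω
    rw [Filter.mem_limsup_iff_frequently_mem] at hω
    obtain ⟨j, hj⟩ := hω.exists
    exact ⟨j, hj⟩
  filter_upwards [hae] with ω hω
  choose f hf using hω
  refine ⟨Finset.univ.sup f + 1, fun n hn => ?_⟩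
  have hn1 : 1 ≤ n := le_trans (Nat.succ_le_succ (Nat.zero_le _)) hn
  refine key hn1 (fun j => X j ω) (fun v => ⟨f v, ?_, hf v⟩)
  exact lt_of_lt_of_le (Nat.lt_succ_of_le (Finset.le_sup (Finset.mem_univ v))) hn
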